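/- Let f: [0,π] → R⁺ be continuous with f(0) = 1, satisfying f(π − d) = f(d/2)·f(π − d/2) for all d ∈ [0,π], f(π/2) = 1, and the property that f(d/2) = 1 if and only if f(d) = 1. Then f is identically 1 on [0,π]. -/

import Mathlib

open Real in
lemma f_dyadic_one (f : ℝ → ℝ)
    (h0 : f 0 = 1)
    (hfe : ∀ d ∈ Set.Icc 0 Real.pi, f (Real.pi - d) = f (d / 2) * f (Real.pi - d / 2))
    (hhalfpi : f (Real.pi / 2) = 1)
    (hiff : ∀ d ∈ Set.Icc 0 Real.pi, (f (d / 2) = 1 ↔ f d = 1)) :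
    ∀ n : ℕ, ∀ k : ℕ, k ≤ 2 ^ n → f (k * Real.pi / 2 ^ n) = 1 := by
  intro n
  induction n with
  | zero =>
    intro k hk
    interval_cases k
    · simpa using h0
    · have hπ : Real.pi ∈ Set.Icc 0 Real.pi := ⟨Real.pi_nonneg, le_refl _⟩
      have := (hiff Real.pi hπ).mp hhalfpi
      simpa using this
  | succ n ih =>
    -- key: for any level-n point d, f(d/2) = 1 and f(π - d/2) = 1
    have key : ∀ j : ℕ, j ≤ 2 ^ n →
        f ((j * Real.pi / 2 ^ n) / 2) = 1 ∧
        f (Real.pi - (j * Real.pi / 2 ^ n) / 2) = 1 := by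
      intro j hj
      set d : ℝ := j * Real.pi / 2 ^ n with hd
      have hdn : (0:ℝ) ≤ d := by positivity
      have hjr : (j : ℝ) ≤ 2 ^ n := by exact_mod_cast hj
      have hdle : d ≤ Real.pi := by
        rw [hd, div_le_iff₀ (by positivity)]
        calc (j:ℝ) * Real.pi ≤ 2 ^ n * Real.pi := by
              exact mul_le_mul_of_nonneg_right hjr Real.pi_nonneg
          _ = Real.pi * 2 ^ n := by ring
      have hdmem : d ∈ Set.Icc 0 Real.pi := ⟨hdn, hdle⟩
      have hfd : f d = 1 := ih j hj
      have hfhalf : f (d / 2) = 1 := (hiff d hdmem).mpr hfd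
      have hfpd : f (Real.pi - d) = 1 := by
        have h2 : Real.pi - d = (2 ^ n - j : ℕ) * Real.pi / 2 ^ n := by
          have : ((2 ^ n - j : ℕ) : ℝ) = 2 ^ n - j := by
            push_cast [Nat.cast_sub hj]; ring
          rw [this, hd]
          field_simp
        rw [h2]
        exact ih _ (Nat.sub_le _ _)
      have := hfe d hdmem
      rw [hfpd, hfhalf, one_mul] at this
      exact ⟨hfhalf, this.symm⟩
    intro k hk
    by_cases hle : k ≤ 2 ^ n
    · have := (key k hle).1
      have heq : (k : ℝ) * Real.pi / 2 ^ (n + 1) = (k * Real.pi / 2 ^ n) / 2 := by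
        rw [pow_succ]; ring
      rw [heq]; exact this
    · push_neg at hle
      set j : ℕ := 2 ^ (n + 1) - k with hj
      have hjle : j ≤ 2 ^ n := by
        have : 2 ^ (n + 1) = 2 ^ n + 2 ^ n := by ring
        omega
      have := (key j hjle).2
      have heq : (k : ℝ) * Real.pi / 2 ^ (n + 1) =
          Real.pi - (j * Real.pi / 2 ^ n) / 2 := by
        have hjr : (j : ℝ) = 2 ^ (n + 1) - k := by
          push_cast [hj, Nat.cast_sub hk]; ring
        rw [hjr, pow_succ]
        push_cast [pow_succ]
        field_simp
        ring
      rw [heq]; exact this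

open Real in
/-- A positive continuous function on `[0,π]` satisfying the functional relations
of Lemma `s1` is identically `1`. -/
theorem f_identically_one (f : ℝ → ℝ)
    (hcont : ContinuousOn f (Set.Icc 0 Real.pi))
    (hpos : ∀ x ∈ Set.Icc 0 Real.pi, 0 < f x)
    (h0 : f 0 = 1)
    (hfe : ∀ d ∈ Set.Icc 0 Real.pi, f (Real.pi - d) = f (d / 2) * f (Real.pi - d / 2))
    (hhalfpi : f (Real.pi / 2) = 1)
    (hiff : ∀ d ∈ Set.Icc 0 Real.pi, (f (d / 2) = 1 ↔ f d = 1)) :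
    ∀ x ∈ Set.Icc 0 Real.pi, f x = 1 := by
  have hdy := f_dyadic_one f h0 hfe hhalfpi hiff
  intro x hx
  obtain ⟨hx0, hxπ⟩ := hx
  have hπpos : (0:ℝ) < Real.pi := Real.pi_pos
  -- dyadic approximating sequence
  set a : ℕ → ℝ := fun n => (⌊2 ^ n * x / Real.pi⌋₊ : ℝ) * Real.pi / 2 ^ n with ha
  have hkle : ∀ n : ℕ, ⌊2 ^ n * x / Real.pi⌋₊ ≤ 2 ^ n := by
    intro n
    have h1 : 2 ^ n * x / Real.pi ≤ (2 ^ n : ℕ) := by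
      rw [div_le_iff₀ hπpos]
      push_cast
      exact mul_le_mul_of_nonneg_left hxπ (by positivity)
    calc ⌊2 ^ n * x / Real.pi⌋₊ ≤ ⌊((2 ^ n : ℕ) : ℝ)⌋₊ := Nat.floor_mono h1
      _ = 2 ^ n := Nat.floor_natCast _
  have hfa : ∀ n, f (a n) = 1 := fun n => hdy n _ (hkle n)
  have hax : ∀ n, a n ≤ x := by
    intro n
    have := Nat.floor_le (by positivity : (0:ℝ) ≤ 2 ^ n * x / Real.pi)
    rw [ha]
    rw [div_le_iff₀ (by positivity : (0:ℝ) < (2:ℝ) ^ n)]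
    calc (⌊2 ^ n * x / Real.pi⌋₊ : ℝ) * Real.pi ≤ (2 ^ n * x / Real.pi) * Real.pi :=
          mul_le_mul_of_nonneg_right this Real.pi_nonneg
      _ = x * 2 ^ n := by field_simp
  have haxl : ∀ n, x - Real.pi / 2 ^ n ≤ a n := by
    intro n
    have hlt : 2 ^ n * x / Real.pi < ⌊2 ^ n * x / Real.pi⌋₊ + 1 := Nat.lt_floor_add_one _
    have h2 : (0:ℝ) < (2:ℝ) ^ n := by positivity
    rw [div_lt_iff₀ hπpos] at hlt
    show x - Real.pi / 2 ^ n ≤ (⌊2 ^ n * x / Real.pi⌋₊ : ℝ) * Real.pi / 2 ^ n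
    rw [sub_le_iff_le_add, ← add_div, le_div_iff₀ h2]
    nlinarith [hlt]
  have htend : Filter.Tendsto a Filter.atTop (nhds x) := by
    have hlow : Filter.Tendsto (fun n : ℕ => x - Real.pi / 2 ^ n) Filter.atTop (nhds x) := by
      have : Filter.Tendsto (fun n : ℕ => Real.pi / 2 ^ n) Filter.atTop (nhds 0) := by
        have h := tendsto_pow_atTop_nhds_zero_of_lt_one
          (by norm_num : (0:ℝ) ≤ 1/2) (by norm_num : (1/2:ℝ) < 1)
        simpa [div_eq_mul_inv, inv_pow, div_pow, one_div] using h.const_mul Real.pi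
      simpa using (tendsto_const_nhds (x := x)).sub this
    exact tendsto_of_tendsto_of_tendsto_of_le_of_le hlow tendsto_const_nhds haxl hax
  have hmem : ∀ n, a n ∈ Set.Icc 0 Real.pi := by
    intro n
    exact ⟨by positivity, le_trans (hax n) hxπ⟩
  have hcomp : Filter.Tendsto (f ∘ a) Filter.atTop (nhds (f x)) := by
    apply (hcont x ⟨hx0, hxπ⟩).tendsto.comp
    rw [tendsto_nhdsWithin_iff]
    exact ⟨htend, Filter.Eventually.of_forall hmem⟩
  have : Filter.Tendsto (f ∘ a) Filter.atTop (nhds 1) := by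
    rw [show f ∘ a = fun _ => (1:ℝ) from funext hfa]
    exact tendsto_const_nhds
  exact tendsto_nhds_unique hcomp this
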